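/- Let n be an odd positive integer. Then the only irreducible subalgebra of the algebra of n×n real matrices M_n(ℝ) is M_n(ℝ) itself. (Burnside's Theorem for real matrices of odd size.) -/

import Mathlib

open Polynomial

private lemma odd_root' : ∀ d : ℕ, ∀ p : ℝ[X], p.natDegree = d → Odd d → ∃ x : ℝ, p.IsRoot x := by
  intro d
  induction d using Nat.strong_induction_on with
  | _ d ih =>
    intro p hd hodd
    have hd1 : 1 ≤ d := by
      rcases Nat.eq_zero_or_pos d with h | h
      · exact absurd (h ▸ hodd) (by simp)
      · exact h
    have hp0 : p ≠ 0 := by rintro rfl; rw [natDegree_zero] at hd; omega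
    have hpu : ¬IsUnit p := by
      intro hu
      have := Polynomial.natDegree_eq_zero_of_isUnit hu
      omega
    obtain ⟨q, hqirr, hqdvd⟩ := WfDvdMonoid.exists_irreducible_factor hpu hp0
    obtain ⟨r, hr⟩ := hqdvd
    have hq0 : q ≠ 0 := hqirr.ne_zero
    have hr0 : r ≠ 0 := by rintro rfl; rw [mul_zero] at hr; exact hp0 hr
    have hdeg : q.natDegree + r.natDegree = d := by
      rw [← hd, hr, Polynomial.natDegree_mul hq0 hr0]
    have h1 : 0 < q.natDegree := hqirr.natDegree_pos
    have h2 : q.natDegree ≤ 2 := hqirr.natDegree_le_two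
    rcases (by omega : q.natDegree = 1 ∨ q.natDegree = 2) with hq1 | hq2
    · obtain ⟨a, b, hab⟩ := Polynomial.exists_eq_X_add_C_of_natDegree_le_one (by omega) (p := q)
      have ha : a ≠ 0 := by
        rintro rfl
        rw [map_zero, zero_mul, zero_add] at hab
        rw [hab, natDegree_C] at hq1
        simp at hq1
      refine ⟨-b / a, ?_⟩
      rw [hr, IsRoot, eval_mul, hab]
      have : eval (-b / a) (C a * X + C b) = 0 := by
        simp only [eval_add, eval_mul, eval_C, eval_X]
        field_simp
        ring
      rw [this, zero_mul]
    · have hrd : r.natDegree < d := by omega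
      have hrodd : Odd r.natDegree := by
        rcases hodd with ⟨m, hm⟩
        exact ⟨m - 1, by omega⟩
      obtain ⟨x, hx⟩ := ih r.natDegree hrd r rfl hrodd
      exact ⟨x, by rw [hr, IsRoot, eval_mul, hx]; ring⟩

private lemma mulVec_ext' {n : ℕ} {D E : Matrix (Fin n) (Fin n) ℝ}
    (h : ∀ x, D.mulVec x = E.mulVec x) : D = E := by
  ext i j
  have := congrFun (h (Pi.single j 1)) i
  simpa [Matrix.mulVec_single] using this

/-- Burnside's Theorem for real matrices of odd size: for odd
`n`, the only irreducible subalgebra of `M_n(ℝ)` is `M_n(ℝ)` itself. -/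
theorem stmt11 {n : ℕ} (hn : 0 < n) (hodd : Odd n)
    (𝒜 : NonUnitalSubalgebra ℝ (Matrix (Fin n) (Fin n) ℝ))
    (hne : ∃ A ∈ 𝒜, A ≠ 0)
    (hirr : ∀ W : Submodule ℝ (Fin n → ℝ),
      (∀ A ∈ 𝒜, ∀ x ∈ W, A.mulVec x ∈ W) → W = ⊥ ∨ W = ⊤) :
    𝒜 = ⊤ := by
  classical
  -- Step 1: the commutant of 𝒜 consists of scalar matrices (uses `n` odd).
  have comm_scalar : ∀ C : Matrix (Fin n) (Fin n) ℝ,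
      (∀ A ∈ 𝒜, C * A = A * C) → ∃ c : ℝ, C = c • 1 := by
    intro C hC
    have key : ∀ D : Matrix (Fin n) (Fin n) ℝ,
        (∀ A ∈ 𝒜, D * A = A * D) → D.det = 0 → D = 0 := by
      intro D hD hdet
      obtain ⟨v, hvne, hv⟩ := Matrix.exists_mulVec_eq_zero_iff.mpr hdet
      have hker := hirr (LinearMap.ker D.mulVecLin) ?_
      · rcases hker with hbot | htop
        · exfalso
          have hm : v ∈ LinearMap.ker D.mulVecLin := by
            simpa [LinearMap.mem_ker, Matrix.mulVecLin_apply] using hv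
          rw [hbot, Submodule.mem_bot] at hm
          exact hvne hm
        · apply mulVec_ext' (E := 0)
          intro x
          have hm : x ∈ LinearMap.ker D.mulVecLin := htop ▸ Submodule.mem_top
          rw [LinearMap.mem_ker, Matrix.mulVecLin_apply] at hm
          simp [hm]
      · intro A hA x hx
        rw [LinearMap.mem_ker, Matrix.mulVecLin_apply] at hx ⊢
        rw [Matrix.mulVec_mulVec, hD A hA, ← Matrix.mulVec_mulVec, hx, Matrix.mulVec_zero]
    have hdegree : C.charpoly.natDegree = n := by
      rw [Matrix.charpoly_natDegree_eq_dim, Fintype.card_fin]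
    obtain ⟨t, ht⟩ := odd_root' n C.charpoly hdegree hodd
    have hdet : (t • (1 : Matrix (Fin n) (Fin n) ℝ) - C).det = 0 := by
      have h1 : (Polynomial.evalRingHom t) C.charpoly
          = ((Matrix.charmatrix C).map (Polynomial.evalRingHom t)).det := by
        rw [Matrix.charpoly]
        exact RingHom.map_det _ _
      have h2 : (Matrix.charmatrix C).map ⇑(Polynomial.evalRingHom t)
          = t • (1 : Matrix (Fin n) (Fin n) ℝ) - C := by
        ext i j
        by_cases h : i = j
        · subst h
          simp [Matrix.map_apply, Matrix.charmatrix_apply_eq, Matrix.sub_apply,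
            Matrix.smul_apply, Matrix.one_apply_eq]
        · simp [Matrix.map_apply, Matrix.charmatrix_apply_ne _ _ _ h, Matrix.sub_apply,
            Matrix.smul_apply, Matrix.one_apply_ne h]
      rw [h2] at h1
      rw [← h1]
      simpa [Polynomial.coe_evalRingHom] using ht
    have hcomm2 : ∀ A ∈ 𝒜, (t • (1 : Matrix (Fin n) (Fin n) ℝ) - C) * A
        = A * (t • (1 : Matrix (Fin n) (Fin n) ℝ) - C) := by
      intro A hA
      rw [sub_mul, mul_sub, hC A hA, Algebra.smul_mul_assoc, one_mul,
        Algebra.mul_smul_comm, mul_one]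
    have h0 := key _ hcomm2 hdet
    rw [sub_eq_zero] at h0
    exact ⟨t, h0.symm⟩
  -- the unital span S = 𝒜 + ℝ·1
  set S : Submodule ℝ (Matrix (Fin n) (Fin n) ℝ) :=
    𝒜.toSubmodule ⊔ (Submodule.span ℝ {(1 : Matrix (Fin n) (Fin n) ℝ)}) with hSdef
  have hmemS : ∀ X, X ∈ S ↔ ∃ A ∈ 𝒜, ∃ c : ℝ, X = A + c • 1 := by
    intro X
    constructor
    · intro hX
      rw [hSdef, Submodule.mem_sup] at hX
      obtain ⟨a, ha, b, hb, rfl⟩ := hX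
      rw [Submodule.mem_span_singleton] at hb
      obtain ⟨c, rfl⟩ := hb
      exact ⟨a, ha, c, rfl⟩
    · rintro ⟨A, hA, c, rfl⟩
      exact Submodule.add_mem_sup hA (Submodule.mem_span_singleton.mpr ⟨c, rfl⟩)
  have honeS : (1 : Matrix (Fin n) (Fin n) ℝ) ∈ S :=
    (hmemS 1).mpr ⟨0, zero_mem _, 1, by simp⟩
  have hAS : ∀ A ∈ 𝒜, A ∈ S := fun A hA => (hmemS A).mpr ⟨A, hA, 0, by simp⟩
  have hmulS : ∀ X ∈ S, ∀ Y ∈ S, X * Y ∈ S := by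
    intro X hX Y hY
    rw [hmemS] at hX hY ⊢
    obtain ⟨A, hA, c, rfl⟩ := hX
    obtain ⟨B, hB, d, rfl⟩ := hY
    refine ⟨A * B + c • B + d • A, ?_, c * d, ?_⟩
    · exact add_mem (add_mem (mul_mem hA hB) (SMulMemClass.smul_mem c hB))
        (SMulMemClass.smul_mem d hA)
    · simp only [mul_add, add_mul, Algebra.mul_smul_comm, Algebra.smul_mul_assoc,
        one_mul, mul_one, smul_smul, smul_add, mul_comm]
      abel
  -- sums and mulVec
  have sum_mulVec : ∀ (ι : Type) (s : Finset ι) (x : Fin n → ℝ)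
      (B : ι → Matrix (Fin n) (Fin n) ℝ),
      (∑ i ∈ s, B i).mulVec x = ∑ i ∈ s, (B i).mulVec x := by
    intro ι s x B
    exact map_sum
      ({ toFun := fun A : Matrix (Fin n) (Fin n) ℝ => A.mulVec x
         map_add' := fun A B => Matrix.add_mulVec A B x
         map_smul' := fun c A => by simp [Matrix.smul_mulVec] } :
        Matrix (Fin n) (Fin n) ℝ →ₗ[ℝ] (Fin n → ℝ)) B s
  -- linear-map version of the commutant lemma
  have comm_scalar' : ∀ θ : (Fin n → ℝ) →ₗ[ℝ] (Fin n → ℝ),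
      (∀ A ∈ 𝒜, ∀ x, θ (A.mulVec x) = A.mulVec (θ x)) → ∃ c : ℝ, ∀ x, θ x = c • x := by
    intro θ hθ
    have hmv : ∀ x, (LinearMap.toMatrix' θ).mulVec x = θ x := by
      intro x
      rw [← Matrix.toLin'_apply, Matrix.toLin'_toMatrix']
    have hcm : ∀ A ∈ 𝒜, (LinearMap.toMatrix' θ) * A = A * (LinearMap.toMatrix' θ) := by
      intro A hA
      apply mulVec_ext'
      intro x
      rw [← Matrix.mulVec_mulVec, ← Matrix.mulVec_mulVec, hmv, hmv, hθ A hA]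
    obtain ⟨c, hc⟩ := comm_scalar (LinearMap.toMatrix' θ) hcm
    refine ⟨c, fun x => ?_⟩
    rw [← hmv x, hc, Matrix.smul_mulVec, Matrix.one_mulVec]
  -- Step 2: density (Jacobson-density-style induction).
  have dens : ∀ (k : ℕ) (v : Fin k → (Fin n → ℝ)), LinearIndependent ℝ v →
      ∀ w : Fin k → (Fin n → ℝ), ∃ A ∈ S, ∀ i, A.mulVec (v i) = w i := by
    intro k
    induction k with
    | zero =>
      intro v _ w
      exact ⟨0, zero_mem S, fun i => i.elim0⟩
    | succ k IH =>
      intro v hv w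
      have hsnoc := linearIndependent_fin_snoc.mp
        (show LinearIndependent ℝ (Fin.snoc (Fin.init v) (v (Fin.last k))) by
          rwa [Fin.snoc_init_self])
      set v' : Fin k → (Fin n → ℝ) := Fin.init v with hv'def
      set u : Fin n → ℝ := v (Fin.last k) with hudef
      have hv' : LinearIndependent ℝ v' := hsnoc.1
      let Z : Submodule ℝ (Fin n → ℝ) :=
        { carrier := {z | ∃ A, A ∈ S ∧ (∀ i, A.mulVec (v' i) = 0) ∧ A.mulVec u = z}
          add_mem' := by
            rintro a b ⟨A, hA, hA0, rfl⟩ ⟨B, hB, hB0, rfl⟩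
            exact ⟨A + B, add_mem hA hB,
              fun i => by rw [Matrix.add_mulVec, hA0 i, hB0 i, add_zero],
              Matrix.add_mulVec _ _ _⟩
          zero_mem' := ⟨0, zero_mem S, fun i => Matrix.zero_mulVec _, Matrix.zero_mulVec _⟩
          smul_mem' := by
            rintro c a ⟨A, hA, hA0, rfl⟩
            exact ⟨c • A, Submodule.smul_mem S c hA,
              fun i => by rw [Matrix.smul_mulVec, hA0 i, smul_zero],
              Matrix.smul_mulVec _ _ _⟩ }
      have hZmem : ∀ z, z ∈ Z ↔ ∃ A, A ∈ S ∧ (∀ i, A.mulVec (v' i) = 0) ∧ A.mulVec u = z :=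
        fun z => Iff.rfl
      have hZinv : ∀ A ∈ 𝒜, ∀ z ∈ Z, A.mulVec z ∈ Z := by
        intro A hA z hz
        obtain ⟨B, hBS, hB0, rfl⟩ := (hZmem z).mp hz
        refine (hZmem _).mpr ⟨A * B, hmulS _ (hAS A hA) _ hBS, fun i => ?_, ?_⟩
        · rw [← Matrix.mulVec_mulVec, hB0 i, Matrix.mulVec_zero]
        · rw [← Matrix.mulVec_mulVec]
      rcases hirr Z hZinv with hbot | htop
      · -- Z = ⊥ contradicts linear independence
        exfalso
        have uniq : ∀ B B' : Matrix (Fin n) (Fin n) ℝ, B ∈ S → B' ∈ S →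
            (∀ i, B.mulVec (v' i) = B'.mulVec (v' i)) → B.mulVec u = B'.mulVec u := by
          intro B B' hB hB' h
          have hmem : (B - B').mulVec u ∈ Z := (hZmem _).mpr
            ⟨B - B', sub_mem hB hB',
              fun i => by rw [Matrix.sub_mulVec, h i, sub_self], rfl⟩
          rw [hbot, Submodule.mem_bot] at hmem
          rwa [Matrix.sub_mulVec, sub_eq_zero] at hmem
        have hex : ∀ (i : Fin k) (x : Fin n → ℝ),
            ∃ A, A ∈ S ∧ ∀ j, A.mulVec (v' j) = (Pi.single i x : Fin k → Fin n → ℝ) j := by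
          intro i x
          obtain ⟨A, hA1, hA2⟩ := IH v' hv' (Pi.single i x)
          exact ⟨A, hA1, hA2⟩
        choose G hGS hGv using hex
        set θ : Fin k → (Fin n → ℝ) → (Fin n → ℝ) := fun i x => (G i x).mulVec u with hθdef
        have θadd : ∀ i x y, θ i (x + y) = θ i x + θ i y := by
          intro i x y
          have h1 : (G i (x + y)).mulVec u = (G i x + G i y).mulVec u := by
            refine uniq _ _ (hGS _ _) (add_mem (hGS _ _) (hGS _ _)) fun j => ?_
            rw [Matrix.add_mulVec, hGv, hGv, hGv]
            by_cases h : j = i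
            · subst h; simp
            · simp [Pi.single_eq_of_ne h]
          simpa [hθdef, Matrix.add_mulVec] using h1
        have θsmul : ∀ i (c : ℝ) x, θ i (c • x) = c • θ i x := by
          intro i c x
          have h1 : (G i (c • x)).mulVec u = (c • G i x).mulVec u := by
            refine uniq _ _ (hGS _ _) (Submodule.smul_mem S c (hGS _ _)) fun j => ?_
            rw [Matrix.smul_mulVec, hGv, hGv]
            by_cases h : j = i
            · subst h; simp
            · simp [Pi.single_eq_of_ne h]
          simpa [hθdef, Matrix.smul_mulVec] using h1
        have θcomm : ∀ i, ∀ A ∈ 𝒜, ∀ x, θ i (A.mulVec x) = A.mulVec (θ i x) := by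
          intro i A hA x
          have h1 : (G i (A.mulVec x)).mulVec u = (A * G i x).mulVec u := by
            refine uniq _ _ (hGS _ _) (hmulS _ (hAS A hA) _ (hGS _ _)) fun j => ?_
            rw [hGv, ← Matrix.mulVec_mulVec, hGv]
            by_cases h : j = i
            · subst h; simp
            · simp [Pi.single_eq_of_ne h]
          rw [hθdef]
          simpa [← Matrix.mulVec_mulVec] using h1
        have hscalar : ∀ i : Fin k, ∃ c : ℝ, ∀ x, θ i x = c • x := by
          intro i
          exact comm_scalar'
            { toFun := θ i
              map_add' := θadd i
              map_smul' := fun c x => by simp [θsmul i c x] }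
            (θcomm i)
        choose c hc using hscalar
        -- apply the key identity to the identity matrix
        have hsum : (1 : Matrix (Fin n) (Fin n) ℝ).mulVec u
            = ∑ i, (G i ((1 : Matrix (Fin n) (Fin n) ℝ).mulVec (v' i))).mulVec u := by
          have h2 := uniq (1 : Matrix (Fin n) (Fin n) ℝ)
            (∑ i, G i ((1 : Matrix (Fin n) (Fin n) ℝ).mulVec (v' i))) honeS
            (Submodule.sum_mem S fun i _ => hGS _ _) ?_
          · rw [h2, sum_mulVec]
          · intro j
            symm
            rw [sum_mulVec]
            simp_rw [hGv]
            exact (Finset.sum_apply j Finset.univ _).symm.trans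
              (congrFun (Finset.univ_sum_single
                (fun i => (1 : Matrix (Fin n) (Fin n) ℝ).mulVec (v' i))) j)
        simp only [Matrix.one_mulVec] at hsum
        have hsum2 : u = ∑ i, c i • v' i := by
          rw [hsum]
          exact Finset.sum_congr rfl fun i _ => hc i (v' i)
        refine hsnoc.2 ?_
        rw [hsum2]
        exact Submodule.sum_mem _ fun i _ =>
          Submodule.smul_mem _ _ (Submodule.subset_span ⟨i, rfl⟩)
      · -- Z = ⊤ : build the interpolating matrix
        obtain ⟨A₀, hA₀S, hA₀⟩ := IH v' hv' (fun i => w i.castSucc)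
        have hmem : w (Fin.last k) - A₀.mulVec u ∈ Z := htop ▸ Submodule.mem_top
        obtain ⟨A₁, hA₁S, hA₁0, hA₁u⟩ := (hZmem _).mp hmem
        refine ⟨A₀ + A₁, add_mem hA₀S hA₁S, fun i => ?_⟩
        refine Fin.lastCases ?_ ?_ i
        · show (A₀ + A₁).mulVec u = w (Fin.last k)
          rw [Matrix.add_mulVec, hA₁u]
          abel
        · intro j
          show (A₀ + A₁).mulVec (v' j) = w j.castSucc
          rw [Matrix.add_mulVec, hA₁0 j, add_zero]
          exact hA₀ j
  -- Step 3: S is the full matrix algebra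
  have hStop : ∀ F : Matrix (Fin n) (Fin n) ℝ, F ∈ S := by
    intro F
    have hbasis : LinearIndependent ℝ (fun i : Fin n => (Pi.single i 1 : Fin n → ℝ)) := by
      have h := (Pi.basisFun ℝ (Fin n)).linearIndependent
      have hcoe : ⇑(Pi.basisFun ℝ (Fin n)) = fun i : Fin n => (Pi.single i 1 : Fin n → ℝ) :=
        funext fun i => Pi.basisFun_apply ℝ (Fin n) i
      rwa [hcoe] at h
    obtain ⟨A, hAS', hA⟩ := dens n _ hbasis (fun i => F.mulVec (Pi.single i 1))
    have hAF : A = F := by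
      ext i j
      have := congrFun (hA j) i
      simpa [Matrix.mulVec_single] using this
    rwa [← hAF]
  -- Step 4: 𝒜 is a two-sided ideal of the full matrix algebra, hence everything.
  obtain ⟨A₀, hA₀, hA₀ne⟩ := hne
  obtain ⟨k, l, hkl⟩ : ∃ k l, A₀ k l ≠ 0 := by
    by_contra h
    push_neg at h
    exact hA₀ne (by ext i j; simpa using h i j)
  have hideal : ∀ F G : Matrix (Fin n) (Fin n) ℝ, F * A₀ * G ∈ 𝒜 := by
    have hleft : ∀ F : Matrix (Fin n) (Fin n) ℝ, ∀ B ∈ 𝒜, F * B ∈ 𝒜 := by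
      intro F B hB
      obtain ⟨A, hA, c, rfl⟩ := (hmemS F).mp (hStop F)
      rw [add_mul, Algebra.smul_mul_assoc, one_mul]
      exact add_mem (mul_mem hA hB) (SMulMemClass.smul_mem c hB)
    have hright : ∀ G : Matrix (Fin n) (Fin n) ℝ, ∀ B ∈ 𝒜, B * G ∈ 𝒜 := by
      intro G B hB
      obtain ⟨A, hA, c, rfl⟩ := (hmemS G).mp (hStop G)
      rw [mul_add, Algebra.mul_smul_comm, mul_one]
      exact add_mem (mul_mem hB hA) (SMulMemClass.smul_mem c hB)
    intro F G
    exact hright G _ (hleft F A₀ hA₀)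
  have hstd : ∀ i j, Matrix.single i j (1 : ℝ) ∈ 𝒜 := by
    intro i j
    have h := hideal (Matrix.single i k ((A₀ k l)⁻¹)) (Matrix.single l j 1)
    have heq : Matrix.single i k ((A₀ k l)⁻¹) * A₀ * Matrix.single l j 1
        = Matrix.single i j (1 : ℝ) := by
      ext r s
      by_cases hs : s = j
      · subst hs
        rw [Matrix.mul_single_apply_same]
        by_cases hr : r = i
        · subst hr
          rw [Matrix.single_mul_apply_same, Matrix.single_apply_same,
            mul_one, inv_mul_cancel₀ hkl]
        · rw [Matrix.single_mul_apply_of_ne (h := hr), zero_mul,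
            Matrix.single_apply_of_ne]
          exact fun hc => hr hc.1.symm
      · rw [Matrix.mul_single_apply_of_ne (hbj := hs),
          Matrix.single_apply_of_ne]
        exact fun hc => hs hc.2.symm
    rw [heq] at h
    exact h
  rw [NonUnitalAlgebra.eq_top_iff]
  intro F
  rw [Matrix.matrix_eq_sum_single F]
  refine sum_mem fun i _ => sum_mem fun j _ => ?_
  have : Matrix.single i j (F i j) = (F i j) • Matrix.single i j (1 : ℝ) := by
    rw [Matrix.smul_single, smul_eq_mul, mul_one]
  rw [this]
  exact SMulMemClass.smul_mem _ (hstd i j)
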